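/- Let ρ and ρ' be two n-qubit quantum states with cumulative distribution functions F_ρ and F_{ρ'}. Then for every ε ≥ 0: F_{ρ'}(ε) ≤ F_ρ(2ε) + 4·‖ρ − ρ'‖₁ / (trace ρ'²). -/

import Mathlib

open Matrix Kronecker
open scoped ComplexOrder

noncomputable def pauli1 : Fin 4 → Matrix (Fin 2) (Fin 2) ℂ
  | 0 => !![1, 0; 0, 1]
  | 1 => !![0, 1; 1, 0]
  | 2 => !![0, -Complex.I; Complex.I, 0]
  | 3 => !![1, 0; 0, -1]

noncomputable def PauliOp {n : ℕ} (a : Fin n → Fin 4) :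
    Matrix (Fin n → Fin 2) (Fin n → Fin 2) ℂ :=
  Matrix.of fun z z' => ∏ i, pauli1 (a i) (z i) (z' i)

/-- The trace norm of a matrix: the trace of the positive semidefinite square root of `Aᴴ * A`. -/
noncomputable def traceNorm {m : Type*} [Fintype m] [DecidableEq m]
    (A : Matrix m m ℂ) : ℝ :=
  ((Matrix.posSemidef_conjTranspose_mul_self A).1.cfc Real.sqrt).trace.re

/-- A quantum state: positive semidefinite with unit trace. -/
structure IsState {m : Type*} [Fintype m] (ρ : Matrix m m ℂ) : Prop where
  posSemidef : ρ.PosSemidef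
  trace_one : ρ.trace = 1

/-- Pauli expectation value `⟨P_a⟩_ρ`. -/
noncomputable def pExp {n : ℕ} (ρ : Matrix (Fin n → Fin 2) (Fin n → Fin 2) ℂ)
    (a : Fin n → Fin 4) : ℝ := ((PauliOp a * ρ).trace).re

/-- The purity `tr ρ²`. -/
noncomputable def purity {m : Type*} [Fintype m] (ρ : Matrix m m ℂ) : ℝ :=
  ((ρ * ρ).trace).re

/-- The Pauli distribution `p_ρ`. -/
noncomputable def pDist {n : ℕ} (ρ : Matrix (Fin n → Fin 2) (Fin n → Fin 2) ℂ)
    (a : Fin n → Fin 4) : ℝ := (pExp ρ a) ^ 2 / (2 ^ n * purity ρ)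

/-- The cumulative distribution function `F_ρ`. -/
noncomputable def cdf {n : ℕ} (ρ : Matrix (Fin n → Fin 2) (Fin n → Fin 2) ℂ)
    (ε : ℝ) : ℝ := ∑ a : Fin n → Fin 4, if (pExp ρ a) ^ 2 ≤ ε then pDist ρ a else 0

/-- The maximally entangled state `|Φ₀⟩`. -/
noncomputable def Phi0 (n : ℕ) : (Fin n → Fin 2) × (Fin n → Fin 2) → ℂ :=
  fun p => if p.1 = p.2 then (↑(Real.sqrt (2 ^ n)))⁻¹ else 0

/-- The Bell state `|Φ_a⟩ = (1 ⊗ P_a)|Φ₀⟩`. -/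
noncomputable def BellVec {n : ℕ} (a : Fin n → Fin 4) :
    (Fin n → Fin 2) × (Fin n → Fin 2) → ℂ :=
  ((1 : Matrix (Fin n → Fin 2) (Fin n → Fin 2) ℂ) ⊗ₖ PauliOp a).mulVec (Phi0 n)

/-- The Bell distribution `q_ρ(a) = ⟨Φ_a| ρ ⊗ ρ |Φ_a⟩`. -/
noncomputable def qDist {n : ℕ} (ρ : Matrix (Fin n → Fin 2) (Fin n → Fin 2) ℂ)
    (a : Fin n → Fin 4) : ℝ :=
  (star (BellVec a) ⬝ᵥ ((ρ ⊗ₖ ρ).mulVec (BellVec a))).re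

/-- The W state. -/
noncomputable def Wstate (n : ℕ) : (Fin n → Fin 2) → ℂ :=
  fun z => if (∑ i, (z i : ℕ)) = 1 then (↑(Real.sqrt n))⁻¹ else 0

/-- The W state projector `|W_n⟩⟨W_n|`. -/
noncomputable def Wproj (n : ℕ) : Matrix (Fin n → Fin 2) (Fin n → Fin 2) ℂ :=
  Matrix.vecMulVec (Wstate n) (star (Wstate n))


set_option linter.unusedSectionVars false
set_option linter.unusedVariables false

section Aux

lemma pauli1_complete (i j k l : Fin 2) :
    ∑ c : Fin 4, pauli1 c i j * pauli1 c k l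
      = 2 * (if i = l then 1 else 0) * (if j = k then 1 else 0) := by
  fin_cases i <;> fin_cases j <;> fin_cases k <;> fin_cases l <;>
    simp [pauli1, Fin.sum_univ_four] <;> norm_num

lemma prod_ite_eq_fun {n : ℕ} (z w : Fin n → Fin 2) :
    (∏ i, if z i = w i then (1:ℂ) else 0) = if z = w then 1 else 0 := by
  by_cases h : z = w
  · simp [h]
  · rw [if_neg h]
    obtain ⟨i, hi⟩ := Function.ne_iff.mp h
    exact Finset.prod_eq_zero (Finset.mem_univ i) (by simp [hi])

lemma pauli_complete {n : ℕ} (z z' w w' : Fin n → Fin 2) :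
    ∑ a : Fin n → Fin 4, (∏ i, pauli1 (a i) (z i) (z' i)) * ∏ i, pauli1 (a i) (w i) (w' i)
      = 2 ^ n * (if z = w' then 1 else 0) * (if z' = w then 1 else 0) := by
  have : ∀ a : Fin n → Fin 4,
      (∏ i, pauli1 (a i) (z i) (z' i)) * ∏ i, pauli1 (a i) (w i) (w' i)
        = ∏ i, pauli1 (a i) (z i) (z' i) * pauli1 (a i) (w i) (w' i) := fun a =>
    (Finset.prod_mul_distrib).symm
  simp_rw [this]
  rw [← Fintype.prod_sum (f := fun i c => pauli1 c (z i) (z' i) * pauli1 c (w i) (w' i))]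
  simp_rw [pauli1_complete]
  rw [Finset.prod_mul_distrib, Finset.prod_mul_distrib, Finset.prod_const,
    prod_ite_eq_fun, prod_ite_eq_fun]
  simp [Finset.card_univ]

lemma pauli_orth {n : ℕ} (M N : Matrix (Fin n → Fin 2) (Fin n → Fin 2) ℂ) :
    ∑ a : Fin n → Fin 4, (PauliOp a * M).trace * (PauliOp a * N).trace
      = 2 ^ n * (M * N).trace := by
  have htr : ∀ (A : Matrix (Fin n → Fin 2) (Fin n → Fin 2) ℂ) (a : Fin n → Fin 4),
      (PauliOp a * A).trace = ∑ z, ∑ z', (∏ i, pauli1 (a i) (z i) (z' i)) * A z' z := by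
    intro A a
    simp [Matrix.trace, Matrix.diag, Matrix.mul_apply, PauliOp]
  simp_rw [htr]
  have key : ∀ p : (Fin n → Fin 4) × ((Fin n → Fin 2) × (Fin n → Fin 2)) ×
      (Fin n → Fin 2) × (Fin n → Fin 2), True := fun _ => trivial
  calc ∑ a : Fin n → Fin 4, (∑ z, ∑ z', (∏ i, pauli1 (a i) (z i) (z' i)) * M z' z)
        * (∑ w, ∑ w', (∏ i, pauli1 (a i) (w i) (w' i)) * N w' w)
      = ∑ a : Fin n → Fin 4, ∑ z, ∑ z', ∑ w, ∑ w',
          ((∏ i, pauli1 (a i) (z i) (z' i)) * ∏ i, pauli1 (a i) (w i) (w' i))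
          * (M z' z * N w' w) := by
        refine Finset.sum_congr rfl fun a _ => ?_
        rw [Finset.sum_mul]
        refine Finset.sum_congr rfl fun z _ => ?_
        rw [Finset.sum_mul]
        refine Finset.sum_congr rfl fun z' _ => ?_
        rw [Finset.mul_sum]
        refine Finset.sum_congr rfl fun w _ => ?_
        rw [Finset.mul_sum]
        refine Finset.sum_congr rfl fun w' _ => ?_
        ring
    _ = ∑ z, ∑ z', ∑ w, ∑ w', (∑ a : Fin n → Fin 4,
          (∏ i, pauli1 (a i) (z i) (z' i)) * ∏ i, pauli1 (a i) (w i) (w' i))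
          * (M z' z * N w' w) := by
        rw [Finset.sum_comm]
        refine Finset.sum_congr rfl fun z _ => ?_
        rw [Finset.sum_comm]
        refine Finset.sum_congr rfl fun z' _ => ?_
        rw [Finset.sum_comm]
        refine Finset.sum_congr rfl fun w _ => ?_
        rw [Finset.sum_comm]
        refine Finset.sum_congr rfl fun w' _ => ?_
        rw [Finset.sum_mul]
    _ = 2 ^ n * (M * N).trace := by
        simp_rw [pauli_complete]
        simp only [ite_mul, mul_ite, mul_zero, zero_mul, mul_one, one_mul,
          Finset.sum_ite_eq, Finset.sum_ite_eq', Finset.mem_univ, if_true]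
        simp [Matrix.trace, Matrix.diag, Matrix.mul_apply, Finset.mul_sum]
        rw [Finset.sum_comm]


variable {m : Type*} [Fintype m] [DecidableEq m]

lemma star_mul_self_re' (z : ℂ) : (star z * z).re = Complex.normSq z := by
  simp [Complex.normSq_apply, Complex.mul_re]

lemma mul_star_self_re' (z : ℂ) : (z * star z).re = Complex.normSq z := by
  simp [Complex.normSq_apply, Complex.mul_re]

noncomputable def frob (A : Matrix m m ℂ) : ℝ := ∑ i, ∑ j, Complex.normSq (A i j)

lemma frob_nonneg (A : Matrix m m ℂ) : 0 ≤ frob A :=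
  Finset.sum_nonneg fun i _ => Finset.sum_nonneg fun j _ => Complex.normSq_nonneg _

lemma herm_trace_sq {H : Matrix m m ℂ} (hH : H.IsHermitian) :
    (H * H).trace = (frob H : ℂ) := by
  have h : ∀ i j, H j i = (starRingEnd ℂ) (H i j) := fun i j => (hH.apply j i).symm
  simp only [Matrix.trace, Matrix.diag, Matrix.mul_apply, frob]
  push_cast
  refine Finset.sum_congr rfl fun i _ => Finset.sum_congr rfl fun j _ => ?_
  rw [h i j, Complex.mul_conj]

lemma psd_diag_re_nonneg {σ : Matrix m m ℂ} (hσ : σ.PosSemidef) (i : m) :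
    0 ≤ (σ i i).re := by
  obtain ⟨B, rfl⟩ : ∃ B : Matrix m m ℂ, σ = Bᴴ * B := by
    open scoped MatrixOrder in exact CStarAlgebra.nonneg_iff_eq_star_mul_self.mp hσ.nonneg
  simp only [Matrix.mul_apply, conjTranspose_apply, Complex.re_sum]
  refine Finset.sum_nonneg fun l _ => ?_
  rw [star_mul_self_re']
  exact Complex.normSq_nonneg _

lemma psd_trace_re_nonneg {σ : Matrix m m ℂ} (hσ : σ.PosSemidef) :
    0 ≤ σ.trace.re := by
  rw [Matrix.trace, Complex.re_sum]
  exact Finset.sum_nonneg fun i _ => psd_diag_re_nonneg hσ i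

lemma psd_entry_sq {σ : Matrix m m ℂ} (hσ : σ.PosSemidef) (i j : m) :
    Complex.normSq (σ i j) ≤ (σ i i).re * (σ j j).re := by
  obtain ⟨B, rfl⟩ : ∃ B : Matrix m m ℂ, σ = Bᴴ * B := by
    open scoped MatrixOrder in exact CStarAlgebra.nonneg_iff_eq_star_mul_self.mp hσ.nonneg
  have hdiag : ∀ k, ((Bᴴ * B) k k).re = ∑ l, Complex.normSq (B l k) := by
    intro k
    simp only [Matrix.mul_apply, conjTranspose_apply, Complex.re_sum]
    exact Finset.sum_congr rfl fun l _ => star_mul_self_re' _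
  rw [hdiag, hdiag]
  have h1 : ‖(Bᴴ * B) i j‖ ≤ ∑ l, ‖B l i‖ * ‖B l j‖ := by
    simp only [Matrix.mul_apply, conjTranspose_apply]
    refine (norm_sum_le _ _).trans ?_
    refine Finset.sum_le_sum fun l _ => ?_
    rw [norm_mul]
    simp
  have h2 : (∑ l, ‖B l i‖ * ‖B l j‖) ^ 2
      ≤ (∑ l, ‖B l i‖ ^ 2) * ∑ l, ‖B l j‖ ^ 2 :=
    Finset.sum_mul_sq_le_sq_mul_sq _ _ _
  have h3 : Complex.normSq ((Bᴴ * B) i j) = ‖(Bᴴ * B) i j‖ ^ 2 :=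
    (Complex.sq_norm _).symm
  rw [h3]
  calc ‖(Bᴴ * B) i j‖ ^ 2
      ≤ (∑ l, ‖B l i‖ * ‖B l j‖) ^ 2 := by
        apply pow_le_pow_left₀ (norm_nonneg _) h1
    _ ≤ (∑ l, ‖B l i‖ ^ 2) * ∑ l, ‖B l j‖ ^ 2 := h2
    _ = (∑ l, Complex.normSq (B l i)) * ∑ l, Complex.normSq (B l j) := by
        simp [Complex.sq_norm]

lemma psd_frob_le {σ : Matrix m m ℂ} (hσ : σ.PosSemidef) :
    frob σ ≤ σ.trace.re ^ 2 := by
  have : σ.trace.re ^ 2 = ∑ i, ∑ j, (σ i i).re * (σ j j).re := by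
    rw [Matrix.trace, Complex.re_sum, sq, Finset.sum_mul_sum]
    rfl
  rw [this]
  exact Finset.sum_le_sum fun i _ => Finset.sum_le_sum fun j _ => psd_entry_sq hσ i j

lemma trace_mul_abs_le (M B : Matrix m m ℂ) (hB : B.IsHermitian) :
    (M * B).trace.re ≤ Real.sqrt (frob M) * Real.sqrt (frob B) := by
  have h : ∀ i j, B j i = (starRingEnd ℂ) (B i j) := fun i j => (hB.apply j i).symm
  have h1 : (M * B).trace.re ≤ ∑ i, ∑ j, ‖M i j‖ * ‖B i j‖ := by
    calc (M * B).trace.re ≤ ‖(M * B).trace‖ := Complex.re_le_norm _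
      _ ≤ ∑ i, ‖∑ j, M i j * B j i‖ := by
          simp only [Matrix.trace, Matrix.diag, Matrix.mul_apply]
          exact norm_sum_le _ _
      _ ≤ ∑ i, ∑ j, ‖M i j‖ * ‖B i j‖ := by
          refine Finset.sum_le_sum fun i _ => ?_
          refine (norm_sum_le _ _).trans ?_
          refine Finset.sum_le_sum fun j _ => ?_
          rw [norm_mul, h i j]
          simp
  refine h1.trans ?_
  rw [← Real.sqrt_mul (frob_nonneg M)]
  have h2 : (∑ i, ∑ j, ‖M i j‖ * ‖B i j‖) ^ 2
      ≤ frob M * frob B := by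
    have := Finset.sum_mul_sq_le_sq_mul_sq Finset.univ
      (fun p : m × m => ‖M p.1 p.2‖) (fun p => ‖B p.1 p.2‖)
    simp only [Fintype.sum_prod_type] at this
    calc (∑ i, ∑ j, ‖M i j‖ * ‖B i j‖) ^ 2
        ≤ (∑ i, ∑ j, ‖M i j‖ ^ 2) * ∑ i, ∑ j, ‖B i j‖ ^ 2 := this
      _ = frob M * frob B := by simp [frob, Complex.sq_norm]
  have h3 : 0 ≤ ∑ i, ∑ j, ‖M i j‖ * ‖B i j‖ :=
    Finset.sum_nonneg fun i _ => Finset.sum_nonneg fun j _ =>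
      mul_nonneg (norm_nonneg _) (norm_nonneg _)
  calc (∑ i, ∑ j, ‖M i j‖ * ‖B i j‖)
      = Real.sqrt ((∑ i, ∑ j, ‖M i j‖ * ‖B i j‖) ^ 2) := by
        rw [Real.sqrt_sq h3]
    _ ≤ Real.sqrt (frob M * frob B) := Real.sqrt_le_sqrt h2


lemma pauli1_conj (c : Fin 4) (i j : Fin 2) :
    (starRingEnd ℂ) (pauli1 c i j) = pauli1 c j i := by
  fin_cases c <;> fin_cases i <;> fin_cases j <;> simp [pauli1]

lemma PauliOp_isHermitian {n : ℕ} (a : Fin n → Fin 4) : (PauliOp a).IsHermitian := by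
  ext z z'
  calc (PauliOp a)ᴴ z z' = (starRingEnd ℂ) (∏ i, pauli1 (a i) (z' i) (z i)) := rfl
    _ = ∏ i, (starRingEnd ℂ) (pauli1 (a i) (z' i) (z i)) := map_prod _ _ _
    _ = ∏ i, pauli1 (a i) (z i) (z' i) := by simp_rw [pauli1_conj]
    _ = PauliOp a z z' := rfl

lemma trace_pauli_star {n : ℕ} {A : Matrix (Fin n → Fin 2) (Fin n → Fin 2) ℂ}
    (hA : A.IsHermitian) (a : Fin n → Fin 4) :
    (starRingEnd ℂ) ((PauliOp a * A).trace) = (PauliOp a * A).trace := by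
  calc (starRingEnd ℂ) ((PauliOp a * A).trace)
      = ((PauliOp a * A)ᴴ).trace := (trace_conjTranspose _).symm
    _ = (Aᴴ * (PauliOp a)ᴴ).trace := by rw [conjTranspose_mul]
    _ = (A * PauliOp a).trace := by rw [hA.eq, (PauliOp_isHermitian a).eq]
    _ = (PauliOp a * A).trace := trace_mul_comm _ _


lemma sum_trace_re_sq {n : ℕ} (A : Matrix (Fin n → Fin 2) (Fin n → Fin 2) ℂ)
    (hA : A.IsHermitian) :
    ∑ a : Fin n → Fin 4, ((PauliOp a * A).trace.re) ^ 2 = 2 ^ n * frob A := by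
  have hreal : ∀ a : Fin n → Fin 4,
      (((PauliOp a * A).trace.re : ℝ) : ℂ) = (PauliOp a * A).trace := fun a =>
    Complex.conj_eq_iff_re.mp (trace_pauli_star hA a)
  have horth : ∑ a : Fin n → Fin 4, ((PauliOp a * A).trace) ^ 2
      = 2 ^ n * ((A * A).trace) := by
    simpa [sq] using pauli_orth A A
  calc ∑ a : Fin n → Fin 4, ((PauliOp a * A).trace.re) ^ 2
      = (∑ a : Fin n → Fin 4, ((PauliOp a * A).trace) ^ 2).re := by
        rw [Complex.re_sum]
        refine Finset.sum_congr rfl fun a _ => ?_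
        rw [← hreal a]
        norm_cast
    _ = (2 ^ n * (A * A).trace).re := by rw [horth]
    _ = 2 ^ n * frob A := by
        rw [herm_trace_sq hA]
        norm_cast

lemma frob_pos {m : Type*} [Fintype m] [DecidableEq m] {A : Matrix m m ℂ}
    (h : A ≠ 0) : 0 < frob A := by
  rcases (frob_nonneg A).lt_or_eq with h' | h'
  · exact h'
  · exfalso
    apply h
    ext i j
    have h1 : ∀ i ∈ Finset.univ, ∑ j, Complex.normSq (A i j) = 0 :=
      (Finset.sum_eq_zero_iff_of_nonneg fun i _ =>
        Finset.sum_nonneg fun j _ => Complex.normSq_nonneg _).mp h'.symm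
    have h2 : Complex.normSq (A i j) = 0 :=
      (Finset.sum_eq_zero_iff_of_nonneg fun j _ => Complex.normSq_nonneg _).mp
        (h1 i (Finset.mem_univ i)) j (Finset.mem_univ j)
    simpa [Complex.normSq_eq_zero] using h2

lemma purity_eq_frob {m : Type*} [Fintype m] [DecidableEq m] {A : Matrix m m ℂ}
    (hA : A.IsHermitian) : purity A = frob A := by
  unfold purity
  rw [herm_trace_sq hA]
  norm_cast

end Aux

set_option maxHeartbeats 1000000 in
/-- For `n`-qubit states `ρ, ρ'` and any `ε ≥ 0`,
`F_{ρ'}(ε) ≤ F_ρ(2ε) + 4‖ρ − ρ'‖₁ / tr(ρ'²)`. -/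
theorem stmt_5 {n : ℕ} (hn : 1 ≤ n)
    (ρ ρ' : Matrix (Fin n → Fin 2) (Fin n → Fin 2) ℂ)
    (hρ : IsState ρ) (hρ' : IsState ρ') :
    ∀ ε : ℝ, 0 ≤ ε →
      cdf ρ' ε ≤ cdf ρ (2 * ε) + 4 * traceNorm (ρ - ρ') / purity ρ' := by
  intro ε hε
  classical
  set M : Matrix (Fin n → Fin 2) (Fin n → Fin 2) ℂ := ρ - ρ' with hMdef
  set B : Matrix (Fin n → Fin 2) (Fin n → Fin 2) ℂ := ρ + ρ' with hBdef
  have hρh : ρ.IsHermitian := hρ.posSemidef.1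
  have hρ'h : ρ'.IsHermitian := hρ'.posSemidef.1
  have hM : M.IsHermitian := hρh.sub hρ'h
  have hB : B.IsHermitian := hρh.add hρ'h
  set t : ℝ := traceNorm (ρ - ρ') with htdef
  set N : ℝ := 2 ^ n with hNdef
  have hN0 : (0:ℝ) < N := by positivity
  -- positivity of t
  set S := (Matrix.posSemidef_conjTranspose_mul_self (ρ - ρ')).1.cfc Real.sqrt with hSdef
  have hSpsd : S.PosSemidef := by
    rw [hSdef, ← IsHermitian.cfc_eq]
    open scoped MatrixOrder in
    exact Matrix.nonneg_iff_posSemidef.mp (cfc_nonneg fun x _ => Real.sqrt_nonneg x)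
  have ht0 : 0 ≤ t := psd_trace_re_nonneg hSpsd
  -- frob M ≤ t ^ 2
  have hfrobM : frob M ≤ t ^ 2 := by
    have h1 : ((frob M : ℂ)) = ((frob S : ℂ)) := by
      rw [← herm_trace_sq hM, ← herm_trace_sq hSpsd.1]
      have h2 : S * S = (ρ - ρ')ᴴ * (ρ - ρ') := by
        open scoped MatrixOrder in
        (rw [hSdef, ← IsHermitian.cfc_eq, ← cfc_mul (fun x => Real.sqrt x) (fun x => Real.sqrt x)]
         conv_rhs => rw [← cfc_id' (R := ℝ) (a := (ρ - ρ')ᴴ * (ρ - ρ'))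
           (ha := isHermitian_conjTranspose_mul_self _)]
         refine cfc_congr fun x hx => ?_
         have hx0 : 0 ≤ x := spectrum_nonneg_of_nonneg
           (Matrix.nonneg_iff_posSemidef.mpr (posSemidef_conjTranspose_mul_self _)) hx
         simp [Real.mul_self_sqrt hx0])
      have h3 : (ρ - ρ')ᴴ = M := hM.eq
      rw [h2, h3]
    have h4 : frob M = frob S := by exact_mod_cast h1
    rw [h4]
    exact psd_frob_le hSpsd
  -- frob B ≤ 4
  have hBtr : B.trace.re = 2 := by
    rw [hBdef, Matrix.trace_add, hρ.trace_one, hρ'.trace_one]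
    norm_num
  have hfrobB : frob B ≤ 4 := by
    have := psd_frob_le (hρ.posSemidef.add hρ'.posSemidef)
    rw [hBtr] at this
    linarith
  -- purities
  have hτ : purity ρ = frob ρ := purity_eq_frob hρh
  have hτ' : purity ρ' = frob ρ' := purity_eq_frob hρ'h
  have hρne : ρ ≠ 0 := by
    intro h
    have := hρ.trace_one
    rw [h] at this
    simp at this
  have hρ'ne : ρ' ≠ 0 := by
    intro h
    have := hρ'.trace_one
    rw [h] at this
    simp at this
  have hτ0 : 0 < purity ρ := by rw [hτ]; exact frob_pos hρne
  have hτ'0 : 0 < purity ρ' := by rw [hτ']; exact frob_pos hρ'ne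
  -- purity difference bound
  have hdiffpur : purity ρ - purity ρ' ≤ 2 * t := by
    have hMB : M * B = ρ * ρ + ρ * ρ' - (ρ' * ρ + ρ' * ρ') := by
      rw [hMdef, hBdef]
      noncomm_ring
    have htrMB : (M * B).trace = (ρ * ρ).trace - (ρ' * ρ').trace := by
      rw [hMB, Matrix.trace_sub, Matrix.trace_add, Matrix.trace_add,
        Matrix.trace_mul_comm ρ' ρ]
      ring
    have h1 : purity ρ - purity ρ' = (M * B).trace.re := by
      rw [htrMB, Complex.sub_re]; rfl
    have h2 : (M * B).trace.re ≤ Real.sqrt (frob M) * Real.sqrt (frob B) :=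
      trace_mul_abs_le M B hB
    have h3 : Real.sqrt (frob M) ≤ t := by
      calc Real.sqrt (frob M) ≤ Real.sqrt (t ^ 2) := Real.sqrt_le_sqrt hfrobM
        _ = t := by rw [Real.sqrt_sq ht0]
    have h4 : Real.sqrt (frob B) ≤ 2 := by
      calc Real.sqrt (frob B) ≤ Real.sqrt 4 := Real.sqrt_le_sqrt hfrobB
        _ = 2 := by
          rw [show (4:ℝ) = 2 ^ 2 by norm_num, Real.sqrt_sq (by norm_num : (0:ℝ) ≤ 2)]
    calc purity ρ - purity ρ' = (M * B).trace.re := h1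
      _ ≤ Real.sqrt (frob M) * Real.sqrt (frob B) := h2
      _ ≤ t * 2 := mul_le_mul h3 h4 (Real.sqrt_nonneg _) ht0
      _ = 2 * t := by ring
  -- pExp differences
  have hdiff : ∀ a, pExp ρ a - pExp ρ' a = ((PauliOp a * M).trace).re := by
    intro a
    rw [hMdef, Matrix.mul_sub, Matrix.trace_sub, Complex.sub_re]
    rfl
  have hsum : ∀ a, pExp ρ a + pExp ρ' a = ((PauliOp a * B).trace).re := by
    intro a
    rw [hBdef, Matrix.mul_add, Matrix.trace_add, Complex.add_re]
    rfl
  -- sums of squares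
  have hS1 : ∑ a : Fin n → Fin 4, (pExp ρ a - pExp ρ' a) ^ 2 ≤ N * t ^ 2 := by
    simp_rw [hdiff]
    rw [sum_trace_re_sq M hM]
    exact mul_le_mul_of_nonneg_left hfrobM (le_of_lt hN0)
  have hS2 : ∑ a : Fin n → Fin 4, (pExp ρ a + pExp ρ' a) ^ 2 ≤ N * 4 := by
    simp_rw [hsum]
    rw [sum_trace_re_sq B hB]
    exact mul_le_mul_of_nonneg_left hfrobB (le_of_lt hN0)
  have hSρ : ∑ a : Fin n → Fin 4, (pExp ρ a) ^ 2 = N * purity ρ := by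
    rw [hτ]
    exact sum_trace_re_sq ρ hρh
  -- D bound
  set D : ℝ := ∑ a : Fin n → Fin 4, |(pExp ρ a) ^ 2 - (pExp ρ' a) ^ 2| with hDdef
  have hD0 : 0 ≤ D :=
    Finset.sum_nonneg fun a _ => abs_nonneg _
  have hD : D ≤ N * (2 * t) := by
    have h1 : D = ∑ a : Fin n → Fin 4,
        |pExp ρ a - pExp ρ' a| * |pExp ρ a + pExp ρ' a| := by
      refine Finset.sum_congr rfl fun a _ => ?_
      rw [← abs_mul]
      congr 1
      ring
    have h2 : D ^ 2 ≤ (N * t ^ 2) * (N * 4) := by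
      rw [h1]
      calc (∑ a : Fin n → Fin 4, |pExp ρ a - pExp ρ' a| * |pExp ρ a + pExp ρ' a|) ^ 2
          ≤ (∑ a : Fin n → Fin 4, |pExp ρ a - pExp ρ' a| ^ 2)
            * ∑ a : Fin n → Fin 4, |pExp ρ a + pExp ρ' a| ^ 2 :=
          Finset.sum_mul_sq_le_sq_mul_sq _ _ _
        _ = (∑ a : Fin n → Fin 4, (pExp ρ a - pExp ρ' a) ^ 2)
            * ∑ a : Fin n → Fin 4, (pExp ρ a + pExp ρ' a) ^ 2 := by
          simp [sq_abs]
        _ ≤ (N * t ^ 2) * (N * 4) := by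
          refine mul_le_mul hS1 hS2 (Finset.sum_nonneg fun a _ => sq_nonneg _) ?_
          positivity
    have h3 : (N * t ^ 2) * (N * 4) = (N * (2 * t)) ^ 2 := by ring
    calc D = Real.sqrt (D ^ 2) := by rw [Real.sqrt_sq hD0]
      _ ≤ Real.sqrt ((N * (2 * t)) ^ 2) := by
          rw [← h3]; exact Real.sqrt_le_sqrt h2
      _ = N * (2 * t) := Real.sqrt_sq (by positivity)
  -- rewrite cdfs
  have hcdf : ∀ (σ : Matrix (Fin n → Fin 2) (Fin n → Fin 2) ℂ) (δ : ℝ),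
      cdf σ δ = (∑ a : Fin n → Fin 4, if (pExp σ a) ^ 2 ≤ δ then (pExp σ a) ^ 2 else 0)
        / (2 ^ n * purity σ) := by
    intro σ δ
    rw [cdf, Finset.sum_div]
    refine Finset.sum_congr rfl fun a _ => ?_
    split
    · rfl
    · rw [zero_div]
  set Sig1 : ℝ := ∑ a : Fin n → Fin 4,
    if (pExp ρ' a) ^ 2 ≤ ε then (pExp ρ' a) ^ 2 else 0 with hSig1def
  set Sig2 : ℝ := ∑ a : Fin n → Fin 4,
    if (pExp ρ a) ^ 2 ≤ 2 * ε then (pExp ρ a) ^ 2 else 0 with hSig2def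
  have hSig10 : 0 ≤ Sig1 := Finset.sum_nonneg fun a _ => by positivity
  have hSig20 : 0 ≤ Sig2 := Finset.sum_nonneg fun a _ => by positivity
  -- termwise comparison
  have hterm : Sig1 ≤ Sig2 + D := by
    rw [hSig1def, hSig2def, hDdef, ← Finset.sum_add_distrib]
    refine Finset.sum_le_sum fun a _ => ?_
    set x := pExp ρ' a
    set y := pExp ρ a
    by_cases hx : x ^ 2 ≤ ε
    · by_cases hy : y ^ 2 ≤ 2 * ε
      · rw [if_pos hx, if_pos hy]
        have := le_abs_self (y ^ 2 - x ^ 2)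
        have habs : -(y ^ 2 - x ^ 2) ≤ |y ^ 2 - x ^ 2| := neg_le_abs _
        linarith
      · rw [if_pos hx, if_neg hy]
        push_neg at hy
        have h1 : x ^ 2 ≤ y ^ 2 - x ^ 2 := by linarith
        have h2 : y ^ 2 - x ^ 2 ≤ |y ^ 2 - x ^ 2| := le_abs_self _
        linarith
    · rw [if_neg hx]
      have : (0:ℝ) ≤ if y ^ 2 ≤ 2 * ε then y ^ 2 else 0 := by positivity
      have := abs_nonneg (y ^ 2 - x ^ 2)
      linarith
  have hSig2le : Sig2 ≤ N * purity ρ := by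
    rw [← hSρ, hSig2def]
    refine Finset.sum_le_sum fun a _ => ?_
    split
    · exact le_rfl
    · positivity
  -- final algebra
  rw [hcdf ρ' ε, hcdf ρ (2 * ε), ← hSig1def, ← hSig2def, ← hNdef]
  set τ : ℝ := purity ρ
  set τ' : ℝ := purity ρ' 
  clear_value Sig1 Sig2 D t τ τ' N
  clear hcdf hdiff hsum hSρ hS1 hS2 hτ hτ'
  have hstep : Sig2 * (τ - τ') ≤ 2 * t * (N * τ) := by
    have hNτ : 0 < N * τ := mul_pos hN0 hτ0
    rcases le_or_gt τ τ' with h | h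
    · have h1 : Sig2 * (τ - τ') ≤ 0 :=
        mul_nonpos_of_nonneg_of_nonpos hSig20 (by linarith)
      have h2 : (0:ℝ) ≤ 2 * t * (N * τ) :=
        mul_nonneg (by linarith) (le_of_lt hNτ)
      linarith
    · calc Sig2 * (τ - τ') ≤ (N * τ) * (τ - τ') :=
          mul_le_mul_of_nonneg_right hSig2le (by linarith)
        _ ≤ (N * τ) * (2 * t) :=
          mul_le_mul_of_nonneg_left hdiffpur (le_of_lt hNτ)
        _ = 2 * t * (N * τ) := by ring
  have hkey : Sig1 * τ ≤ Sig2 * τ' + 4 * t * (N * τ) := by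
    have h1 : Sig1 * τ ≤ (Sig2 + D) * τ :=
      mul_le_mul_of_nonneg_right hterm (le_of_lt hτ0)
    have h3 := mul_le_mul_of_nonneg_right hD (le_of_lt hτ0)
    linarith
  have hrw : Sig2 / (N * τ) + 4 * t / τ' - Sig1 / (N * τ')
      = (Sig2 * τ' + 4 * t * (N * τ) - Sig1 * τ) / (N * τ * τ') := by
    field_simp
  have hfin : 0 ≤ (Sig2 * τ' + 4 * t * (N * τ) - Sig1 * τ) / (N * τ * τ') := by
    apply div_nonneg
    · linarith
    · exact le_of_lt (mul_pos (mul_pos hN0 hτ0) hτ'0)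
  linarith [hrw ▸ hfin]
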